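/- The maximum of δ_Y over (a, b] is attained at s = μ and equals the partial expectation of μ − Y over the event {a < Y ≤ μ}: sup_{s ∈ (a, b]} δ_Y(s) = δ_Y(μ) = E_{a,μ}[μ − Y]. -/

import Mathlib

open MeasureTheory

/-- With `Y` integrable, `P(a < Y ≤ b) = 1`, `μ = E[Y]` and
`δ_Y(s) = |min(s,μ) − E[min(s,Y)]|`, the maximum of `δ_Y` over `(a, b]` is attained at
`s = μ` and equals the partial expectation `E_{a,μ}[μ − Y]`. -/
theorem delta_max_at_mean {Ω : Type*} [MeasurableSpace Ω]
    (P : Measure Ω) [IsProbabilityMeasure P]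
    (a b : ℝ) (hab : a < b)
    (Y : Ω → ℝ) (hY : Integrable Y P)
    (hsupp : P {ω | Y ω ∈ Set.Ioc a b} = 1) :
    IsGreatest
        ((fun s : ℝ => |min s (∫ ω, Y ω ∂P) - ∫ ω, min s (Y ω) ∂P|) '' Set.Ioc a b)
        (|min (∫ ω, Y ω ∂P) (∫ ω, Y ω ∂P)
            - ∫ ω, min (∫ ω', Y ω' ∂P) (Y ω) ∂P|) ∧
      |min (∫ ω, Y ω ∂P) (∫ ω, Y ω ∂P) - ∫ ω, min (∫ ω', Y ω' ∂P) (Y ω) ∂P|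
        = ∫ ω in {ω | Y ω ∈ Set.Ioc a (∫ ω', Y ω' ∂P)}, ((∫ ω', Y ω' ∂P) - Y ω) ∂P := by
  set μ : ℝ := ∫ ω, Y ω ∂P with hμ
  -- a.e. statement
  have hnm : NullMeasurableSet {ω | Y ω ∈ Set.Ioc a b} P :=
    hY.aemeasurable.nullMeasurable measurableSet_Ioc
  have hc : P {ω | Y ω ∈ Set.Ioc a b}ᶜ = 0 := by
    have h := measure_compl₀ hnm (measure_ne_top P _)
    rw [hsupp] at h
    simpa using h
  have hae : ∀ᵐ ω ∂P, Y ω ∈ Set.Ioc a b := by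
    rw [Filter.eventually_iff, mem_ae_iff]
    simpa using hc
  -- integrability of min s Y
  have hmin : ∀ s : ℝ, Integrable (fun ω => min s (Y ω)) P := fun s => by
    have := (integrable_const (μ := P) s).inf hY
    simpa [Pi.inf_def] using this
  -- ∫ min s Y ≤ min s μ
  have key : ∀ s : ℝ, ∫ ω, min s (Y ω) ∂P ≤ min s μ := by
    intro s
    refine le_min ?_ ?_
    · calc ∫ ω, min s (Y ω) ∂P ≤ ∫ _, s ∂P :=
            integral_mono (hmin s) (integrable_const s) (fun ω => min_le_left _ _)
        _ = s := by simp
    · exact integral_mono (hmin s) hY (fun ω => min_le_right _ _)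
  -- main bound
  have hbound : ∀ s : ℝ, min s μ - ∫ ω, min s (Y ω) ∂P ≤ μ - ∫ ω, min μ (Y ω) ∂P := by
    intro s
    rcases le_total μ s with h | h
    · rw [min_eq_right h]
      have : ∫ ω, min μ (Y ω) ∂P ≤ ∫ ω, min s (Y ω) ∂P :=
        integral_mono (hmin μ) (hmin s) (fun ω => min_le_min h le_rfl)
      linarith
    · rw [min_eq_left h]
      have h1 : ∫ ω, (min μ (Y ω) - min s (Y ω)) ∂P ≤ μ - s := by
        calc ∫ ω, (min μ (Y ω) - min s (Y ω)) ∂P ≤ ∫ _, (μ - s) ∂P := by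
              refine integral_mono ((hmin μ).sub (hmin s)) (integrable_const _) ?_
              intro ω
              simp only [min_def]
              split_ifs <;> simp <;> linarith
          _ = μ - s := by simp
      rw [integral_sub (hmin μ) (hmin s)] at h1
      linarith
  -- μ ≤ b
  have hμb : μ ≤ b := by
    refine le_trans (integral_mono_ae hY (integrable_const b) ?_) (by simp)
    filter_upwards [hae] with ω hω using hω.2
  -- a < μ
  have haμ : a < μ := by
    have hge : a ≤ μ := by
      refine le_trans (by simp : a ≤ ∫ _ : Ω, a ∂P) ?_
      refine integral_mono_ae (integrable_const a) hY ?_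
      filter_upwards [hae] with ω hω using hω.1.le
    rcases lt_or_eq_of_le hge with h | h
    · exact h
    · exfalso
      have hzero : ∫ ω, (Y ω - a) ∂P = 0 := by
        rw [integral_sub hY (integrable_const a)]
        rw [← hμ, ← h]; simp
      have hnn : 0 ≤ᵐ[P] fun ω => Y ω - a := by
        filter_upwards [hae] with ω hω
        simp [hω.1.le]
      have heqz : (fun ω => Y ω - a) =ᵐ[P] 0 :=
        (integral_eq_zero_iff_of_nonneg_ae hnn (hY.sub (integrable_const a))).mp hzero
      have : ∀ᵐ ω ∂P, False := by
        filter_upwards [hae, heqz] with ω hω hz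
        have : Y ω = a := by
          have := hz
          simp only [Pi.zero_apply] at this
          linarith
        exact absurd (this ▸ hω.1) (lt_irrefl a)
      have hnb : (Filter.NeBot (ae P)) := ae_neBot.mpr (IsProbabilityMeasure.ne_zero P)
      exact this.exists.choose_spec
  -- value of δ at μ
  have hval : |min μ μ - ∫ ω, min μ (Y ω) ∂P| = μ - ∫ ω, min μ (Y ω) ∂P := by
    rw [min_self]
    exact abs_of_nonneg (by linarith [min_self μ ▸ key μ, key μ, (min_self μ).symm ▸ key μ])
  have hkeyμ : ∫ ω, min μ (Y ω) ∂P ≤ μ := by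
    have := key μ; rwa [min_self] at this
  have hval' : |min μ μ - ∫ ω, min μ (Y ω) ∂P| = μ - ∫ ω, min μ (Y ω) ∂P := by
    rw [min_self]; exact abs_of_nonneg (by linarith)
  -- second equality
  have heq2 : μ - ∫ ω, min μ (Y ω) ∂P
      = ∫ ω in {ω | Y ω ∈ Set.Ioc a μ}, (μ - Y ω) ∂P := by
    have hA : NullMeasurableSet {ω | Y ω ∈ Set.Ioc a μ} P :=
      hY.aemeasurable.nullMeasurable measurableSet_Ioc
    set A := {ω | Y ω ∈ Set.Ioc a μ} with hAdef
    have hT : MeasureTheory.toMeasurable P A =ᵐ[P] A := hA.toMeasurable_ae_eq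
    have step1 : ∫ ω in A, (μ - Y ω) ∂P
        = ∫ ω in MeasureTheory.toMeasurable P A, (μ - Y ω) ∂P := by
      rw [Measure.restrict_congr_set hT]
    have step2 : ∫ ω in MeasureTheory.toMeasurable P A, (μ - Y ω) ∂P
        = ∫ ω, (MeasureTheory.toMeasurable P A).indicator (fun ω => μ - Y ω) ω ∂P := by
      rw [integral_indicator (measurableSet_toMeasurable _ _)]
    have step3 : ∫ ω, (MeasureTheory.toMeasurable P A).indicator (fun ω => μ - Y ω) ω ∂P
        = ∫ ω, A.indicator (fun ω => μ - Y ω) ω ∂P :=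
      integral_congr_ae (indicator_ae_eq_of_ae_eq_set hT)
    have step4 : ∫ ω, A.indicator (fun ω => μ - Y ω) ω ∂P
        = ∫ ω, (μ - min μ (Y ω)) ∂P := by
      refine integral_congr_ae ?_
      filter_upwards [hae] with ω hω
      by_cases h : Y ω ≤ μ
      · rw [Set.indicator_of_mem (show ω ∈ A from ⟨hω.1, h⟩), min_eq_right h]
      · rw [Set.indicator_of_notMem (show ω ∉ A from fun hm => h hm.2),
          min_eq_left (le_of_not_ge h)]
        ring
    rw [step1, step2, step3, step4, integral_sub (integrable_const μ) (hmin μ)]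
    simp
  refine ⟨⟨⟨μ, ⟨haμ, hμb⟩, rfl⟩, ?_⟩, by rw [hval']; exact heq2⟩
  rintro x ⟨s, hs, rfl⟩
  dsimp only
  have h1 : |min s μ - ∫ ω, min s (Y ω) ∂P| = min s μ - ∫ ω, min s (Y ω) ∂P :=
    abs_of_nonneg (by linarith [key s])
  rw [h1, hval']
  exact hbound s
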